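/- Let x_1 ≤ x_2 ≤ ... ≤ x_n be positive integers with ∑_{i=1}^n 1/x_i = 1. Then for every 1 ≤ k ≤ n one has k ≤ x_k ≤ u_k(n − k + 1), where u is the sequence defined by u_1 = 1 and u_{k+1} = u_k(u_k + 1). -/

import Mathlib

theorem mono_g (k : ℕ) : ∀ E a b : ℚ, 0 ≤ a → a ≤ b → E ≤ ((k:ℚ)+1) * a →
    b ^ k * (E - (k:ℚ) * b) ≤ a ^ k * (E - (k:ℚ) * a) := by
  induction k with
  | zero => intro E a b ha hab hE; simp
  | succ k ih =>
    intro E a b ha hab hE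
    have hkc : ((k+1 : ℕ) : ℚ) = (k:ℚ) + 1 := by push_cast; ring
    rw [hkc]
    have hkE : E ≤ ((k:ℚ)+1+1) * a := by rw [hkc] at hE; linarith
    have hb : (0:ℚ) ≤ b := le_trans ha hab
    have h1 : b ^ k * ((E - b) - k * b) ≤ a ^ k * ((E - b) - k * a) := by
      apply ih (E - b) a b ha hab; nlinarith
    have h2 : b * (b ^ k * ((E - b) - k * b)) ≤ b * (a ^ k * ((E - b) - k * a)) :=
      mul_le_mul_of_nonneg_left h1 hb
    have h3 : b * (a ^ k * ((E - b) - k * a)) ≤ a * (a ^ k * ((E - a) - k * a)) := by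
      have hak : (0:ℚ) ≤ a ^ k := pow_nonneg ha k
      have key : b * ((E - b) - k * a) ≤ a * ((E - a) - k * a) := by nlinarith
      calc b * (a ^ k * ((E - b) - k * a)) = a ^ k * (b * ((E - b) - k * a)) := by ring
        _ ≤ a ^ k * (a * ((E - a) - k * a)) := mul_le_mul_of_nonneg_left key hak
        _ = a * (a ^ k * ((E - a) - k * a)) := by ring
    have h4 : b ^ (k+1) * (E - ((k:ℚ)+1) * b) = b * (b ^ k * ((E - b) - k * b)) := by ring
    have h5 : a * (a ^ k * ((E - a) - k * a)) = a ^ (k+1) * (E - ((k:ℚ)+1) * a) := by ring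
    rw [h4, ← h5]; exact le_trans h2 h3

/-- AM-GM for nonincreasing positive families. -/
theorem amgm (k : ℕ) (hk : 1 ≤ k) (e : ℕ → ℚ)
    (hpos : ∀ i < k, 0 < e i) (hmono : ∀ i j, i ≤ j → j < k → e j ≤ e i) :
    ∏ i ∈ Finset.range k, e i ≤ ((∑ i ∈ Finset.range k, e i) / k) ^ k := by
  induction k with
  | zero => omega
  | succ k ih =>
    rcases Nat.eq_or_lt_of_le hk with h1 | h2
    · -- k+1 = 1
      have : k = 0 := by omega
      subst this
      simp
    · have hk1 : 1 ≤ k := by omega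
      have hposk : ∀ i < k, 0 < e i := fun i hi => hpos i (by omega)
      have hmonok : ∀ i j, i ≤ j → j < k → e j ≤ e i := fun i j hij hj => hmono i j hij (by omega)
      have IH := ih hk1 hposk hmonok
      set Ek : ℚ := ∑ i ∈ Finset.range k, e i with hEk
      set Ek1 : ℚ := ∑ i ∈ Finset.range (k+1), e i with hEk1
      have hsplit : Ek1 = Ek + e k := Finset.sum_range_succ e k
      have hEkpos : 0 < Ek := by
        rw [hEk]
        apply Finset.sum_pos (fun i hi => hposk i (Finset.mem_range.mp hi))
        exact Finset.nonempty_range_iff.mpr (by omega)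
      have hek : 0 < e k := hpos k (by omega)
      have hkq : (0:ℚ) < (k:ℚ) := by exact_mod_cast Nat.pos_of_ne_zero (by omega)
      have hk1q : (0:ℚ) < (k:ℚ) + 1 := by linarith
      set a : ℚ := Ek1 / ((k:ℚ)+1) with ha
      set b : ℚ := Ek / (k:ℚ) with hb
      have hapos : 0 < a := by
        apply div_pos _ hk1q
        rw [hsplit]; linarith
      -- k * e k ≤ Ek
      have hkek : (k:ℚ) * e k ≤ Ek := by
        rw [hEk]
        calc (k:ℚ) * e k = ∑ _i ∈ Finset.range k, e k := by
              rw [Finset.sum_const, Finset.card_range]; ring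
          _ ≤ ∑ i ∈ Finset.range k, e i := by
              apply Finset.sum_le_sum
              intro i hi
              exact hmono i k (le_of_lt (Finset.mem_range.mp hi)) (by omega)
      have hab : a ≤ b := by
        rw [ha, hb, div_le_div_iff₀ hk1q hkq]
        rw [hsplit]; nlinarith
      have hE : Ek1 ≤ ((k:ℚ)+1) * a := by
        rw [ha]; rw [mul_div_cancel₀]; linarith
      have hmg := mono_g k Ek1 a b (le_of_lt hapos) hab hE
      have hb1 : Ek1 - (k:ℚ) * b = e k := by
        rw [hb, hsplit]; field_simp; ring
      have ha1 : Ek1 - (k:ℚ) * a = a := by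
        rw [ha]; field_simp; ring
      rw [hb1, ha1] at hmg
      -- hmg : b ^ k * e k ≤ a ^ k * a
      calc ∏ i ∈ Finset.range (k+1), e i = (∏ i ∈ Finset.range k, e i) * e k :=
            Finset.prod_range_succ e k
        _ ≤ b ^ k * e k := by
            apply mul_le_mul_of_nonneg_right _ (le_of_lt hek)
            rw [hb]; exact IH
        _ ≤ a ^ k * a := hmg
        _ = a ^ (k+1) := by ring
        _ = ((∑ i ∈ Finset.range (k+1), e i) / ((k+1:ℕ):ℚ)) ^ (k+1) := by
            rw [ha, ← hEk1]; push_cast; ring_nf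

lemma sum_shift (f : ℕ → ℚ) (j q : ℕ) :
    ∑ i ∈ Finset.Ico j q, f (i+1) = ∑ i ∈ Finset.Ico (j+1) (q+1), f i := by
  rw [Finset.sum_Ico_eq_sum_range, Finset.sum_Ico_eq_sum_range]
  have h : q + 1 - (j+1) = q - j := by omega
  rw [h]
  exact Finset.sum_congr rfl (fun i _ => by congr 1; omega)

lemma prod_shift (f : ℕ → ℚ) (j q : ℕ) :
    ∏ i ∈ Finset.Ico j q, f (i+1) = ∏ i ∈ Finset.Ico (j+1) (q+1), f i := by
  rw [Finset.prod_Ico_eq_prod_range, Finset.prod_Ico_eq_prod_range]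
  have h : q + 1 - (j+1) = q - j := by omega
  rw [h]
  exact Finset.prod_congr rfl (fun i _ => by congr 1; omega)

/-- The product domination lemma: if `d` and `e` are nonincreasing positive
families and every tail sum of `d` dominates that of `e`, then `∏ d ≥ ∏ e`. -/
theorem prod_dom (p : ℕ) : ∀ d e : ℕ → ℚ,
    (∀ i j, i ≤ j → j < p → d j ≤ d i) →
    (∀ i j, i ≤ j → j < p → e j ≤ e i) →
    (∀ i < p, 0 < d i) →
    (∀ i < p, 0 < e i) →
    (∀ j ≤ p, ∑ i ∈ Finset.Ico j p, e i ≤ ∑ i ∈ Finset.Ico j p, d i) →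
    ∏ i ∈ Finset.range p, e i ≤ ∏ i ∈ Finset.range p, d i := by
  induction p with
  | zero => intro d e _ _ _ _ _; simp
  | succ p IH =>
    intro d e hdm hem hdp hep hdom
    set a : ℚ := d 0 with ha
    have hapos : 0 < a := hdp 0 (by omega)
    have hdle : ∀ i < p + 1, d i ≤ a := fun i hi => hdm 0 i (by omega) hi
    -- total sums
    have hdom0 : ∑ i ∈ Finset.range (p+1), e i ≤ ∑ i ∈ Finset.range (p+1), d i := by
      have h := hdom 0 (by omega)
      rwa [← Finset.range_eq_Ico] at h
    by_cases hA : e 0 ≤ a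
    · -- Case A : peel the first element
      have hIH := IH (fun i => d (i+1)) (fun i => e (i+1))
        (fun i j hij hj => hdm (i+1) (j+1) (by omega) (by omega))
        (fun i j hij hj => hem (i+1) (j+1) (by omega) (by omega))
        (fun i hi => hdp (i+1) (by omega))
        (fun i hi => hep (i+1) (by omega))
        (fun j hj => by
          rw [sum_shift, sum_shift]
          exact hdom (j+1) (by omega))
      have hde : ∏ i ∈ Finset.range (p+1), d i = (∏ i ∈ Finset.range p, d (i+1)) * d 0 :=
        Finset.prod_range_succ' d p
      have hee : ∏ i ∈ Finset.range (p+1), e i = (∏ i ∈ Finset.range p, e (i+1)) * e 0 :=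
        Finset.prod_range_succ' e p
      rw [hde, hee]
      have hetail : 0 < ∏ i ∈ Finset.range p, e (i+1) :=
        Finset.prod_pos (fun i hi => hep (i+1) (by simpa using Nat.succ_lt_succ (Finset.mem_range.mp hi)))
      have he0 : 0 < e 0 := hep 0 (by omega)
      calc (∏ i ∈ Finset.range p, e (i+1)) * e 0
          ≤ (∏ i ∈ Finset.range p, d (i+1)) * e 0 :=
            mul_le_mul_of_nonneg_right hIH (le_of_lt he0)
        _ ≤ (∏ i ∈ Finset.range p, d (i+1)) * a := by
            apply mul_le_mul_of_nonneg_left hA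
            have : 0 < ∏ i ∈ Finset.range p, d (i+1) :=
              Finset.prod_pos (fun i hi => hdp (i+1) (by simpa using Nat.succ_lt_succ (Finset.mem_range.mp hi)))
            linarith
    · -- Case B : d 0 < e 0
      push_neg at hA
      have hp1 : 1 ≤ p := by
        by_contra hp0
        have hp : p = 0 := by omega
        subst hp
        have h := hdom0
        simp only [zero_add, Finset.sum_range_one] at h
        linarith
      classical
      set P : ℕ → Prop := fun j => (j:ℚ) * a ≤ ∑ i ∈ Finset.range j, e i with hPdef
      have hP1 : P 1 := by
        simp only [hPdef, Finset.sum_range_one, Nat.cast_one, one_mul]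
        linarith
      set k := Nat.findGreatest P (p+1) with hkdef
      have hk1 : 1 ≤ k := Nat.le_findGreatest (by omega) hP1
      have hkp : k ≤ p + 1 := Nat.findGreatest_le (p+1)
      have hPk : P k := Nat.findGreatest_spec (n := p+1) (by omega) hP1
      have hgr : ∀ m, k < m → m ≤ p+1 → ¬ P m :=
        fun m h1 h2 => Nat.findGreatest_is_greatest h1 h2
      clear_value k
      have hEp1 : 0 < ∑ i ∈ Finset.range (p+1), e i :=
        Finset.sum_pos (fun i hi => hep i (Finset.mem_range.mp hi))
          (Finset.nonempty_range_iff.mpr (by omega))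
      by_cases hkP : k = p + 1
      · -- all-equal case
        have hE1 : ((p+1:ℕ):ℚ) * a ≤ ∑ i ∈ Finset.range (p+1), e i := by
          have h := hPk; rw [hkP] at h; exact h
        have hdsum : ∑ i ∈ Finset.range (p+1), d i ≤ ((p+1:ℕ):ℚ) * a := by
          calc ∑ i ∈ Finset.range (p+1), d i ≤ ∑ _i ∈ Finset.range (p+1), a :=
                Finset.sum_le_sum (fun i hi => hdle i (Finset.mem_range.mp hi))
            _ = ((p+1:ℕ):ℚ) * a := by rw [Finset.sum_const, Finset.card_range]; push_cast; ring
        have hdall : ∀ i < p+1, d i = a := by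
          by_contra hcon
          push_neg at hcon
          obtain ⟨i0, hi0, hne⟩ := hcon
          have hlt : d i0 < a := lt_of_le_of_ne (hdle i0 hi0) hne
          have hslt : ∑ i ∈ Finset.range (p+1), d i < ∑ _i ∈ Finset.range (p+1), a :=
            Finset.sum_lt_sum (fun i hi => hdle i (Finset.mem_range.mp hi))
              ⟨i0, Finset.mem_range.mpr hi0, hlt⟩
          rw [Finset.sum_const, Finset.card_range] at hslt
          have hslt2 : ∑ i ∈ Finset.range (p+1), d i < ((p+1:ℕ):ℚ) * a := by
            have : ((p+1):ℕ) • a = ((p+1:ℕ):ℚ) * a := by rw [nsmul_eq_mul]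
            linarith [hslt, this.le]
          linarith [hdom0, hE1]
        have hprd : ∏ i ∈ Finset.range (p+1), d i = a ^ (p+1) := by
          rw [Finset.prod_congr rfl (fun i hi => hdall i (Finset.mem_range.mp hi))]
          rw [Finset.prod_const, Finset.card_range]
        have hamgm := amgm (p+1) (by omega) e (fun i hi => hep i hi)
          (fun i j hij hj => hem i j hij hj)
        have hEle : (∑ i ∈ Finset.range (p+1), e i) / ((p+1:ℕ):ℚ) ≤ a := by
          rw [div_le_iff₀ (by positivity)]
          calc ∑ i ∈ Finset.range (p+1), e i ≤ ∑ i ∈ Finset.range (p+1), d i := hdom0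
            _ ≤ ((p+1:ℕ):ℚ) * a := hdsum
            _ = a * ((p+1:ℕ):ℚ) := by ring
        have hEdivpos : 0 ≤ (∑ i ∈ Finset.range (p+1), e i) / ((p+1:ℕ):ℚ) := by positivity
        calc ∏ i ∈ Finset.range (p+1), e i
            ≤ ((∑ i ∈ Finset.range (p+1), e i) / ((p+1:ℕ):ℚ)) ^ (p+1) := hamgm
          _ ≤ a ^ (p+1) := pow_le_pow_left₀ hEdivpos hEle (p+1)
          _ = ∏ i ∈ Finset.range (p+1), d i := hprd.symm
      · -- main case : 1 ≤ k ≤ p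
        have hkp' : k ≤ p := by omega
        obtain ⟨km, hkm⟩ := Nat.exists_eq_succ_of_ne_zero (by omega : k ≠ 0)
        have hnotP : ¬ P (k+1) := hgr (k+1) (by omega) (by omega)
        have hF2 : ∑ i ∈ Finset.range (k+1), e i < ((k+1:ℕ):ℚ) * a := by
          by_contra hcc
          push_neg at hcc
          exact hnotP hcc
        set Ek : ℚ := ∑ i ∈ Finset.range k, e i with hEkdef
        set Ek1 : ℚ := ∑ i ∈ Finset.range (k+1), e i with hEk1def
        have hsplitk : Ek1 = Ek + e k := Finset.sum_range_succ e k
        have hF1 : (k:ℚ) * a ≤ Ek := hPk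
        set J : ℚ := Ek1 - (k:ℚ) * a with hJdef
        have hekpos : 0 < e k := hep k (by omega)
        have hJek : e k ≤ J := by rw [hJdef, hsplitk]; linarith
        have hJpos : 0 < J := lt_of_lt_of_le hekpos hJek
        have hJa : J < a := by
          rw [hJdef]
          have : ((k+1:ℕ):ℚ) = (k:ℚ) + 1 := by push_cast; ring
          rw [this] at hF2
          linarith
        set e' : ℕ → ℚ := fun i => if i + 1 < k then a else if i + 1 = k then J else e (i+1)
          with he'def
        have he'br1 : ∀ i, i + 1 < k → e' i = a := by
          intro i h; simp only [he'def]; rw [if_pos h]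
        have he'br2 : ∀ i, i + 1 = k → e' i = J := by
          intro i h; simp only [he'def]; rw [if_neg (by omega), if_pos h]
        have he'br3 : ∀ i, k < i + 1 → e' i = e (i+1) := by
          intro i h; simp only [he'def]; rw [if_neg (by omega), if_neg (by omega)]
        have he'le_a : ∀ i < p, e' i ≤ a := by
          intro i hi
          rcases lt_trichotomy (i+1) k with h | h | h
          · rw [he'br1 i h]
          · rw [he'br2 i h]; linarith
          · rw [he'br3 i h]
            have h1 : e (i+1) ≤ e k := hem k (i+1) (by omega) (by omega)
            linarith
        have he'pos : ∀ i < p, 0 < e' i := by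
          intro i hi
          rcases lt_trichotomy (i+1) k with h | h | h
          · rw [he'br1 i h]; exact hapos
          · rw [he'br2 i h]; exact hJpos
          · rw [he'br3 i h]; exact hep (i+1) (by omega)
        have he'mono : ∀ i j, i ≤ j → j < p → e' j ≤ e' i := by
          intro i j hij hj
          rcases lt_trichotomy (j+1) k with h | h | h
          · rw [he'br1 j h, he'br1 i (by omega)]
          · rw [he'br2 j h]
            rcases lt_trichotomy (i+1) k with h2 | h2 | h2
            · rw [he'br1 i h2]; linarith
            · rw [he'br2 i h2]
            · omega
          · rw [he'br3 j h]
            have hjk : e (j+1) ≤ e k := hem k (j+1) (by omega) (by omega)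
            rcases lt_trichotomy (i+1) k with h2 | h2 | h2
            · rw [he'br1 i h2]; linarith
            · rw [he'br2 i h2]; linarith
            · rw [he'br3 i h2]; exact hem (i+1) (j+1) (by omega) (by omega)
        -- sum of e' over range p
        have hsum_e'_init : ∀ j ≤ km, ∑ i ∈ Finset.range j, e' i = (j:ℚ) * a := by
          intro j hj
          rw [Finset.sum_congr rfl (fun i hi => he'br1 i (by
            have := Finset.mem_range.mp hi; omega))]
          rw [Finset.sum_const, Finset.card_range, nsmul_eq_mul]
        have hsum_e'_tail : ∑ i ∈ Finset.Ico k p, e' i = ∑ i ∈ Finset.Ico (k+1) (p+1), e i := by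
          rw [Finset.sum_congr rfl (fun i hi => he'br3 i (by
            have := (Finset.mem_Ico.mp hi).1; omega))]
          exact sum_shift e k p
        have hsum_e'_all : ∑ i ∈ Finset.range p, e' i
            = (∑ i ∈ Finset.range (p+1), e i) - a := by
          have hsplit1 : (∑ i ∈ Finset.range k, e' i) = (km:ℚ) * a + J := by
            rw [hkm, Finset.sum_range_succ, hsum_e'_init km (le_refl km)]
            rw [he'br2 km (by omega)]
          have hsplit2 : (∑ i ∈ Finset.range k, e' i) + ∑ i ∈ Finset.Ico k p, e' i
              = ∑ i ∈ Finset.range p, e' i := Finset.sum_range_add_sum_Ico e' hkp'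
          have hsplit3 : Ek1 + ∑ i ∈ Finset.Ico (k+1) (p+1), e i
              = ∑ i ∈ Finset.range (p+1), e i := Finset.sum_range_add_sum_Ico e (by omega)
          have hkmk : (km:ℚ) = (k:ℚ) - 1 := by rw [hkm]; push_cast; ring
          rw [← hsplit2, hsplit1, hsum_e'_tail, ← hsplit3, hkmk, hJdef]
          ring
        -- domination for the suffix problem
        have hdom' : ∀ j ≤ p, ∑ i ∈ Finset.Ico j p, e' i ≤ ∑ i ∈ Finset.Ico j p, d (i+1) := by
          intro j hj
          have hrhs : ∑ i ∈ Finset.Ico j p, d (i+1) = ∑ i ∈ Finset.Ico (j+1) (p+1), d i :=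
            sum_shift d j p
          by_cases hjk : k ≤ j
          · have hlhs : ∑ i ∈ Finset.Ico j p, e' i = ∑ i ∈ Finset.Ico (j+1) (p+1), e i := by
              rw [Finset.sum_congr rfl (fun i hi => he'br3 i (by
                have := (Finset.mem_Ico.mp hi).1; omega))]
              exact sum_shift e j p
            rw [hlhs, hrhs]
            exact hdom (j+1) (by omega)
          · push_neg at hjk
            have hjkm : j ≤ km := by omega
            have hlhs : ∑ i ∈ Finset.Ico j p, e' i
                = (∑ i ∈ Finset.range (p+1), e i) - a - (j:ℚ) * a := by
              rw [Finset.sum_Ico_eq_sub e' hj, hsum_e'_all, hsum_e'_init j hjkm]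
            have hrhs2 : (∑ i ∈ Finset.range (p+1), e i) - ((j:ℚ)+1) * a
                ≤ ∑ i ∈ Finset.Ico (j+1) (p+1), d i := by
              rw [Finset.sum_Ico_eq_sub d (by omega : j+1 ≤ p+1)]
              have h1 : ∑ i ∈ Finset.range (j+1), d i ≤ ((j:ℚ)+1) * a := by
                calc ∑ i ∈ Finset.range (j+1), d i ≤ ∑ _i ∈ Finset.range (j+1), a :=
                      Finset.sum_le_sum (fun i hi => hdle i (by
                        have := Finset.mem_range.mp hi; omega))
                  _ = ((j:ℚ)+1) * a := by
                      rw [Finset.sum_const, Finset.card_range, nsmul_eq_mul]; push_cast; ring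
              linarith [hdom0]
            rw [hlhs, hrhs]
            calc (∑ i ∈ Finset.range (p+1), e i) - a - (j:ℚ) * a
                = (∑ i ∈ Finset.range (p+1), e i) - ((j:ℚ)+1) * a := by ring
              _ ≤ ∑ i ∈ Finset.Ico (j+1) (p+1), d i := hrhs2
        -- apply IH
        have hIH := IH (fun i => d (i+1)) e'
          (fun i j hij hj => hdm (i+1) (j+1) (by omega) (by omega))
          he'mono
          (fun i hi => hdp (i+1) (by omega))
          he'pos
          hdom'
        -- KEY inequality : ∏_{range (k+1)} e ≤ a^k * J
        have hEkpos : 0 < Ek := by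
          rw [hEkdef]
          exact Finset.sum_pos (fun i hi => hep i (by
            have := Finset.mem_range.mp hi; omega)) (Finset.nonempty_range_iff.mpr (by omega))
        have hkq : (0:ℚ) < (k:ℚ) := by exact_mod_cast (by omega : 0 < k)
        set mu : ℚ := Ek / (k:ℚ) with hmudef
        have hamu : a ≤ mu := by
          rw [hmudef, le_div_iff₀ hkq]
          calc a * (k:ℚ) = (k:ℚ) * a := by ring
            _ ≤ Ek := hF1
        have hEk1le : Ek1 ≤ ((k:ℚ)+1) * a := by
          have hcast : ((k+1:ℕ):ℚ) = (k:ℚ) + 1 := by push_cast; ring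
          rw [hcast] at hF2
          linarith
        have hmg := mono_g k Ek1 a mu (le_of_lt hapos) hamu hEk1le
        have hmu1 : Ek1 - (k:ℚ) * mu = e k := by
          rw [hmudef, hsplitk]
          field_simp; ring
        have hmu2 : Ek1 - (k:ℚ) * a = J := by rw [hJdef]
        rw [hmu1, hmu2] at hmg
        have hamgmk := amgm k (by omega) e
          (fun i hi => hep i (by omega))
          (fun i j hij hj => hem i j hij (by omega))
        have hkey : ∏ i ∈ Finset.range (k+1), e i ≤ a ^ k * J := by
          calc ∏ i ∈ Finset.range (k+1), e i = (∏ i ∈ Finset.range k, e i) * e k :=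
                Finset.prod_range_succ e k
            _ ≤ mu ^ k * e k := mul_le_mul_of_nonneg_right (by
                have : (∑ i ∈ Finset.range k, e i) / ((k:ℕ):ℚ) = mu := by rw [hmudef, hEkdef]
                rw [← this]; exact hamgmk) (le_of_lt hekpos)
            _ ≤ a ^ k * J := hmg
        -- product of e' over range p
        have hprod_e' : ∏ i ∈ Finset.range p, e' i
            = a ^ km * J * ∏ i ∈ Finset.Ico (k+1) (p+1), e i := by
          have h1 : (∏ i ∈ Finset.range k, e' i) * ∏ i ∈ Finset.Ico k p, e' i
              = ∏ i ∈ Finset.range p, e' i := Finset.prod_range_mul_prod_Ico e' hkp'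
          have h2 : ∏ i ∈ Finset.range k, e' i = a ^ km * J := by
            rw [hkm, Finset.prod_range_succ]
            congr 1
            · rw [Finset.prod_congr rfl (fun i hi => he'br1 i (by
                have := Finset.mem_range.mp hi; omega))]
              rw [Finset.prod_const, Finset.card_range]
            · exact he'br2 km (by omega)
          have h3 : ∏ i ∈ Finset.Ico k p, e' i = ∏ i ∈ Finset.Ico (k+1) (p+1), e i := by
            rw [Finset.prod_congr rfl (fun i hi => he'br3 i (by
              have := (Finset.mem_Ico.mp hi).1; omega))]
            exact prod_shift e k p
          rw [← h1, h2, h3]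
        have htailpos : 0 < ∏ i ∈ Finset.Ico (k+1) (p+1), e i :=
          Finset.prod_pos (fun i hi => hep i (Finset.mem_Ico.mp hi).2)
        -- final chain
        calc ∏ i ∈ Finset.range (p+1), e i
            = (∏ i ∈ Finset.range (k+1), e i) * ∏ i ∈ Finset.Ico (k+1) (p+1), e i :=
              (Finset.prod_range_mul_prod_Ico e (by omega)).symm
          _ ≤ (a ^ k * J) * ∏ i ∈ Finset.Ico (k+1) (p+1), e i :=
              mul_le_mul_of_nonneg_right hkey (le_of_lt htailpos)
          _ = a * (a ^ km * J * ∏ i ∈ Finset.Ico (k+1) (p+1), e i) := by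
              have hpow : a ^ k = a * a ^ km := by rw [hkm, pow_succ]; ring
              rw [hpow]; ring
          _ = a * ∏ i ∈ Finset.range p, e' i := by rw [hprod_e']
          _ ≤ a * ∏ i ∈ Finset.range p, d (i+1) :=
              mul_le_mul_of_nonneg_left hIH (le_of_lt hapos)
          _ = ∏ i ∈ Finset.range (p+1), d i := by
              rw [Finset.prod_range_succ' d p]; ring

def Syl (D : ℕ) : ℕ → ℕ
  | 0 => D
  | (j+1) => Syl D j * (Syl D j + 1)

lemma Syl_pos {D : ℕ} (hD : 1 ≤ D) (j : ℕ) : 0 < Syl D j := by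
  induction j with
  | zero => exact hD
  | succ j ih => exact Nat.mul_pos ih (by omega)

lemma Syl_lt_succ {D : ℕ} (hD : 1 ≤ D) (j : ℕ) : Syl D j < Syl D (j+1) := by
  have h := Syl_pos hD j
  show Syl D j < Syl D j * (Syl D j + 1)
  nlinarith

lemma Syl_mono {D : ℕ} (hD : 1 ≤ D) {i j : ℕ} (hij : i ≤ j) : Syl D i ≤ Syl D j := by
  induction j with
  | zero => have : i = 0 := by omega
            subst this; exact le_refl _
  | succ j ih =>
    rcases Nat.eq_or_lt_of_le hij with h | h
    · subst h; exact le_refl _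
    · exact le_trans (ih (by omega)) (le_of_lt (Syl_lt_succ hD j))

/-- telescoping sums of `1/(Syl D i + 1)`. -/
lemma Syl_telescope {D : ℕ} (hD : 1 ≤ D) (j q : ℕ) (hjq : j ≤ q) :
    ∑ i ∈ Finset.Ico j q, (1:ℚ) / ((Syl D i : ℚ) + 1)
      = 1 / (Syl D j : ℚ) - 1 / (Syl D q : ℚ) := by
  induction q with
  | zero =>
    have : j = 0 := by omega
    subst this; simp
  | succ q ih =>
    rcases Nat.eq_or_lt_of_le hjq with h | h
    · subst h; simp
    · have hjq' : j ≤ q := by omega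
      rw [Finset.sum_Ico_succ_top hjq', ih hjq']
      have h1 : (0:ℚ) < (Syl D q : ℚ) := by exact_mod_cast Syl_pos hD q
      have h2 : ((Syl D (q+1) : ℕ) : ℚ) = (Syl D q : ℚ) * ((Syl D q : ℚ) + 1) := by
        show ((Syl D q * (Syl D q + 1) : ℕ) : ℚ) = _
        push_cast; ring
      rw [h2]
      field_simp
      ring

lemma Syl_prod {D : ℕ} (hD : 1 ≤ D) (q : ℕ) :
    (D : ℚ) * ∏ i ∈ Finset.range q, ((Syl D i : ℚ) + 1) = (Syl D q : ℚ) := by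
  induction q with
  | zero => simp [Syl]
  | succ q ih =>
    rw [Finset.prod_range_succ]
    have h2 : ((Syl D (q+1) : ℕ) : ℚ) = (Syl D q : ℚ) * ((Syl D q : ℚ) + 1) := by
      show ((Syl D q * (Syl D q + 1) : ℕ) : ℚ) = _
      push_cast; ring
    rw [h2, ← ih]; ring

/-- Curtiss' theorem: an `m`-term sum of unit fractions lying strictly below `1/D`
is at most `1/D - 1/Syl D m`. -/
theorem curtiss : ∀ (m D : ℕ) (y : ℕ → ℕ), 1 ≤ D →
    (∀ i < m, 0 < y i) → (∀ i j, i ≤ j → j < m → y i ≤ y j) →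
    (∑ i ∈ Finset.range m, (1:ℚ)/(y i)) < 1/D →
    (1:ℚ)/(Syl D m) ≤ 1/D - ∑ i ∈ Finset.range m, (1:ℚ)/(y i) := by
  intro m
  induction m using Nat.strong_induction_on with
  | _ m IH =>
    intro D y hD hypos hymono hsum
    rcases Nat.eq_zero_or_pos m with hm0 | hm1
    · subst hm0; simp [Syl]
    -- notation
    set Sm : ℚ := ∑ i ∈ Finset.range m, (1:ℚ)/(y i) with hSm
    set t : ℚ := 1/D - Sm with htdef
    have ht : 0 < t := by rw [htdef]; linarith
    by_contra hcon
    push_neg at hcon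
    -- hcon : t < 1/Syl D m
    obtain ⟨p, hp⟩ := Nat.exists_eq_succ_of_ne_zero (by omega : m ≠ 0)
    have hSylm : ((Syl D m : ℕ):ℚ) = (Syl D p : ℚ) * ((Syl D p : ℚ) + 1) := by
      rw [hp]; show ((Syl D p * (Syl D p + 1) : ℕ) : ℚ) = _; push_cast; ring
    set S' : ℚ := (Syl D p : ℚ) with hS'def
    have hS'pos : 0 < S' := by rw [hS'def]; exact_mod_cast Syl_pos hD p
    have hS'1 : 1 ≤ S' := by rw [hS'def]; exact_mod_cast Syl_pos hD p
    have htS' : t < 1/S' := by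
      have h1 : (1:ℚ)/(Syl D m) ≤ 1/(S' * (S'+1)) := by rw [hSylm]
      have h2 : 1/(S' * (S'+1)) < 1/S' := by
        apply div_lt_div_of_pos_left one_pos hS'pos
        nlinarith
      calc t < 1/(Syl D m : ℚ) := hcon
        _ = 1/(S'*(S'+1)) := by rw [hSylm]
        _ < 1/S' := h2
    -- the d and e families
    set d : ℕ → ℚ := fun i => (1:ℚ)/(y i) with hd
    set e : ℕ → ℚ := fun i => if i < p then 1/((Syl D i : ℚ)+1) else 1/S' - t with he
    have hebr1 : ∀ i < p, e i = 1/((Syl D i : ℚ)+1) := by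
      intro i h; simp only [he]; rw [if_pos h]
    have hebr2 : e p = 1/S' - t := by simp only [he]; rw [if_neg (by omega)]
    -- positivity of Syl-casts
    have hSylcast : ∀ i, (0:ℚ) < (Syl D i : ℚ) := fun i => by exact_mod_cast Syl_pos hD i
    -- prefix gap estimates from the induction hypothesis
    have hprefix : ∀ j < m, (1:ℚ)/(Syl D j) ≤ 1/D - ∑ i ∈ Finset.range j, (1:ℚ)/(y i) := by
      intro j hj
      apply IH j hj D y hD (fun i hi => hypos i (by omega))
        (fun i k hik hk => hymono i k hik (by omega))
      have hmono_sum : ∑ i ∈ Finset.range j, (1:ℚ)/(y i) ≤ Sm := by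
        rw [hSm]
        apply Finset.sum_le_sum_of_subset_of_nonneg
        · exact Finset.range_subset_range.mpr (by omega)
        · intro i hi _; positivity
      linarith
    -- extra Syl fact
    have hSyl_succ_ge : ∀ i, Syl D i + 1 ≤ Syl D (i+1) := by
      intro i
      have h := Syl_pos hD i
      show Syl D i + 1 ≤ Syl D i * (Syl D i + 1)
      nlinarith
    -- d properties
    have hdpos : ∀ i < m, 0 < d i := by
      intro i hi
      simp only [hd]
      have := hypos i hi
      positivity
    have hdmono : ∀ i j, i ≤ j → j < m → d j ≤ d i := by
      intro i j hij hj
      simp only [hd]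
      apply one_div_le_one_div_of_le
      · exact_mod_cast hypos i (by omega)
      · exact_mod_cast hymono i j hij hj
    -- e properties
    have hS'branch : ∀ i < p, 1/S' - t ≤ 1/((Syl D i : ℚ) + 1) := by
      intro i hi
      have h1 : (Syl D i : ℕ) + 1 ≤ Syl D (i+1) := hSyl_succ_ge i
      have h2 : Syl D (i+1) ≤ Syl D p := Syl_mono hD (by omega)
      have h3 : ((Syl D i : ℚ) + 1) ≤ S' := by
        rw [hS'def]
        have : ((Syl D i + 1 : ℕ) : ℚ) ≤ ((Syl D p : ℕ) : ℚ) := by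
          exact_mod_cast le_trans h1 h2
        push_cast at this
        linarith
      have h4 : 1/S' ≤ 1/((Syl D i : ℚ) + 1) := by
        apply one_div_le_one_div_of_le
        · positivity
        · exact h3
      linarith
    have hepos : ∀ i < m, 0 < e i := by
      intro i hi
      rcases Nat.lt_or_ge i p with h | h
      · rw [hebr1 i h]
        have := hSylcast i
        positivity
      · have : i = p := by omega
        subst this
        rw [hebr2]
        linarith [htS']
    have hemono : ∀ i j, i ≤ j → j < m → e j ≤ e i := by
      intro i j hij hj
      rcases Nat.lt_or_ge j p with h | h
      · rw [hebr1 j h, hebr1 i (by omega)]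
        apply one_div_le_one_div_of_le
        · have := hSylcast i; linarith
        · have : ((Syl D i : ℕ):ℚ) ≤ ((Syl D j : ℕ):ℚ) := by
            exact_mod_cast Syl_mono hD hij
          linarith
      · have hjp : j = p := by omega
        rcases Nat.lt_or_ge i p with h2 | h2
        · rw [hjp, hebr2, hebr1 i h2]
          exact hS'branch i h2
        · have h3 : i = j := by omega
          rw [h3]
    -- tail domination
    have hdom : ∀ j ≤ m, ∑ i ∈ Finset.Ico j m, e i ≤ ∑ i ∈ Finset.Ico j m, d i := by
      intro j hj
      rcases Nat.eq_or_lt_of_le hj with h | h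
      · subst h; simp
      · have hjp : j ≤ p := by omega
        have hLHS : ∑ i ∈ Finset.Ico j m, e i = 1/(Syl D j : ℚ) - t := by
          rw [hp, Finset.sum_Ico_succ_top hjp, hebr2]
          have hcongr : ∑ i ∈ Finset.Ico j p, e i
              = ∑ i ∈ Finset.Ico j p, (1:ℚ)/((Syl D i : ℚ)+1) :=
            Finset.sum_congr rfl (fun i hi => hebr1 i (Finset.mem_Ico.mp hi).2)
          rw [hcongr, Syl_telescope hD j p hjp, hS'def]
          ring
        have hRHS : ∑ i ∈ Finset.Ico j m, d i = (1/D - t) - ∑ i ∈ Finset.range j, d i := by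
          rw [Finset.sum_Ico_eq_sub d (by omega : j ≤ m)]
          have hSme : ∑ i ∈ Finset.range m, d i = Sm := hSm.symm
          rw [hSme, htdef]
          ring
        rw [hLHS, hRHS]
        have := hprefix j (by omega)
        have hsame : ∑ i ∈ Finset.range j, d i = ∑ i ∈ Finset.range j, (1:ℚ)/(y i) := rfl
        rw [hsame]
        linarith
    -- apply the product domination lemma
    have hprod := prod_dom m d e hdmono hemono hdpos hepos hdom
    -- compute both products
    set P : ℕ := ∏ i ∈ Finset.range m, y i with hPdef
    have hPpos : 0 < P := Finset.prod_pos (fun i hi => hypos i (Finset.mem_range.mp hi))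
    have hPQpos : (0:ℚ) < (P:ℚ) := by exact_mod_cast hPpos
    have hprodd : ∏ i ∈ Finset.range m, d i = 1/(P:ℚ) := by
      simp only [hd, one_div]
      rw [Finset.prod_inv_distrib]
      congr 1
      rw [hPdef]
      push_cast
      rfl
    have hprode : ∏ i ∈ Finset.range m, e i = ((D:ℚ)/S') * (1/S' - t) := by
      rw [hp, Finset.prod_range_succ, hebr2]
      congr 1
      have hcongr : ∏ i ∈ Finset.range p, e i
          = ∏ i ∈ Finset.range p, (1:ℚ)/((Syl D i : ℚ)+1) :=
        Finset.prod_congr rfl (fun i hi => hebr1 i (Finset.mem_range.mp hi))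
      rw [hcongr]
      have hq := Syl_prod hD p
      have hprodpos : (0:ℚ) < ∏ i ∈ Finset.range p, ((Syl D i : ℚ) + 1) := by
        apply Finset.prod_pos
        intro i hi
        have := hSylcast i
        linarith
      have hDpos : (0:ℚ) < (D:ℚ) := by exact_mod_cast hD
      simp only [one_div]
      rw [Finset.prod_inv_distrib, inv_eq_one_div,
        div_eq_div_iff (by positivity) (by positivity : S' ≠ 0)]
      rw [hS'def, ← hq]
      ring
    -- integrality : t ≥ 1/(D*P)
    have hint : (1:ℚ) ≤ t * ((D:ℚ) * P) := by
      set N : ℕ := ∑ i ∈ Finset.range m, P / y i with hNdef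
      have hPS : (P:ℚ) * Sm = (N:ℚ) := by
        rw [hSm, Finset.mul_sum, hNdef]
        push_cast
        apply Finset.sum_congr rfl
        intro i hi
        have hdvd : y i ∣ P := Finset.dvd_prod_of_mem y hi
        have hyne : ((y i : ℕ):ℚ) ≠ 0 := by
          have := hypos i (Finset.mem_range.mp hi)
          positivity
        rw [Nat.cast_div hdvd hyne]
        ring
      have hDne : ((D:ℕ):ℚ) ≠ 0 := by positivity
      have heq : t * ((D:ℚ) * P) = (P:ℚ) - (D:ℚ) * N := by
        rw [htdef, ← hPS]
        field_simp
      have hpos2 : (0:ℚ) < (P:ℚ) - (D:ℚ) * N := by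
        rw [← heq]
        positivity
      have hnat : D * N < P := by
        by_contra hcc
        push_neg at hcc
        have : (P:ℚ) ≤ ((D * N : ℕ):ℚ) := by exact_mod_cast hcc
        push_cast at this
        linarith
      have : ((D * N : ℕ):ℚ) + 1 ≤ (P:ℚ) := by exact_mod_cast hnat
      push_cast at this
      rw [heq]
      linarith
    -- final contradiction
    have hfinal : ((D:ℚ)/S') * (1/S' - t) ≤ 1/(P:ℚ) := by
      rw [← hprodd, ← hprode]
      exact hprod
    have hDpos : (0:ℚ) < (D:ℚ) := by exact_mod_cast hD
    have h1P : 1/(P:ℚ) ≤ t * (D:ℚ) := by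
      rw [div_le_iff₀ hPQpos]
      calc (1:ℚ) ≤ t * ((D:ℚ) * P) := hint
        _ = t * (D:ℚ) * P := by ring
    have hchain : ((D:ℚ)/S') * (1/S' - t) ≤ t * (D:ℚ) := le_trans hfinal h1P
    have h' : (D:ℚ) * ((1/S') * (1/S' - t)) ≤ (D:ℚ) * t := by
      calc (D:ℚ) * ((1/S') * (1/S' - t)) = ((D:ℚ)/S') * (1/S' - t) := by ring
        _ ≤ t * (D:ℚ) := hchain
        _ = (D:ℚ) * t := by ring
    have hchain2 : (1/S') * (1/S' - t) ≤ t := le_of_mul_le_mul_left h' hDpos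
    have hgoal : 1/(S' * (S'+1)) ≤ t := by
      rw [div_le_iff₀ (by positivity : (0:ℚ) < S' * (S'+1))]
      have h2 := mul_le_mul_of_nonneg_left hchain2 (by positivity : (0:ℚ) ≤ S' * S')
      have h3 : S' * S' * ((1/S') * (1/S' - t)) = 1 - S' * t := by
        field_simp
      rw [h3] at h2
      nlinarith
    rw [hSylm] at hcon
    linarith



/-- Hong–Rowell Lemma 2.3: if `x 1 ≤ ⋯ ≤ x n` are positive integers with
`∑_{i=1}^n 1 / x i = 1`, then `k ≤ x k ≤ u k * (n - k + 1)` for all `1 ≤ k ≤ n`,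
where `u 1 = 1` and `u (k+1) = u k * (u k + 1)`. -/
theorem hong_rowell_bounds (u : ℕ → ℕ) (hu1 : u 1 = 1)
    (hurec : ∀ k, 1 ≤ k → u (k + 1) = u k * (u k + 1))
    (n : ℕ) (hn : 1 ≤ n) (x : ℕ → ℕ)
    (hxpos : ∀ i ∈ Finset.Icc 1 n, 0 < x i)
    (hmono : ∀ i j, 1 ≤ i → i ≤ j → j ≤ n → x i ≤ x j)
    (hsum : ∑ i ∈ Finset.Icc 1 n, (1 : ℚ) / (x i) = 1) :
    ∀ k ∈ Finset.Icc 1 n, k ≤ x k ∧ x k ≤ u k * (n - k + 1) := by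
  -- u is the Sylvester sequence
  have hu : ∀ j, u (j+1) = Syl 1 j := by
    intro j
    induction j with
    | zero => exact hu1
    | succ j ih =>
      rw [hurec (j+1) (by omega), ih]
      rfl
  intro k hk
  obtain ⟨hk1, hkn⟩ := Finset.mem_Icc.mp hk
  have hxk : 0 < x k := hxpos k hk
  have hxkQ : (0:ℚ) < (x k : ℚ) := by exact_mod_cast hxk
  have hterm_nonneg : ∀ i ∈ Finset.Icc 1 n, (0:ℚ) ≤ 1/(x i) := by
    intro i hi
    have := hxpos i hi
    positivity
  constructor
  · -- lower bound k ≤ x k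
    have hsub : ∑ i ∈ Finset.Icc 1 k, (1:ℚ)/(x i) ≤ 1 := by
      calc ∑ i ∈ Finset.Icc 1 k, (1:ℚ)/(x i)
          ≤ ∑ i ∈ Finset.Icc 1 n, (1:ℚ)/(x i) :=
            Finset.sum_le_sum_of_subset_of_nonneg
              (Finset.Icc_subset_Icc_right hkn) (fun i hi _ => hterm_nonneg i hi)
        _ = 1 := hsum
    have heach : ∀ i ∈ Finset.Icc 1 k, (1:ℚ)/(x k) ≤ 1/(x i) := by
      intro i hi
      obtain ⟨hi1, hik⟩ := Finset.mem_Icc.mp hi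
      apply one_div_le_one_div_of_le
      · exact_mod_cast hxpos i (Finset.mem_Icc.mpr ⟨hi1, le_trans hik hkn⟩)
      · exact_mod_cast hmono i k hi1 hik hkn
    have hcard : ∑ _i ∈ Finset.Icc 1 k, (1:ℚ)/(x k) = (k:ℚ)/(x k) := by
      rw [Finset.sum_const, Nat.card_Icc, show k + 1 - 1 = k from by omega, nsmul_eq_mul]
      ring
    have hkx : (k:ℚ)/(x k) ≤ 1 := by
      rw [← hcard]
      exact le_trans (Finset.sum_le_sum heach) hsub
    have : (k:ℚ) ≤ (x k : ℚ) := by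
      rw [div_le_one hxkQ] at hkx
      exact hkx
    exact_mod_cast this
  · -- upper bound
    set y : ℕ → ℕ := fun i => x (i+1) with hy
    have hsplit0 : (∑ i ∈ Finset.Icc 1 (k-1), (1:ℚ)/(x i))
        + ∑ i ∈ Finset.Icc k n, (1:ℚ)/(x i) = ∑ i ∈ Finset.Icc 1 n, (1:ℚ)/(x i) := by
      have e1 : Finset.Icc 1 (k-1) = Finset.Ico 1 k := by
        rw [← Finset.Ico_add_one_right_eq_Icc]
        congr 1
        omega
      have e2 : Finset.Icc k n = Finset.Ico k (n+1) := by rw [Finset.Ico_add_one_right_eq_Icc]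
      have e3 : Finset.Icc 1 n = Finset.Ico 1 (n+1) := by rw [Finset.Ico_add_one_right_eq_Icc]
      rw [e1, e2, e3]
      exact Finset.sum_Ico_consecutive _ hk1 (by omega)
    have hsplit : (∑ i ∈ Finset.Icc 1 (k-1), (1:ℚ)/(x i))
        + ∑ i ∈ Finset.Icc k n, (1:ℚ)/(x i) = 1 := hsplit0.trans hsum
    set r : ℚ := ∑ i ∈ Finset.Icc k n, (1:ℚ)/(x i) with hr
    have hrpos : 0 < r := by
      rw [hr]
      apply Finset.sum_pos'
      · intro i hi
        exact hterm_nonneg i (Finset.mem_Icc.mpr ⟨le_trans hk1 (Finset.mem_Icc.mp hi).1,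
          (Finset.mem_Icc.mp hi).2⟩)
      · refine ⟨k, Finset.mem_Icc.mpr ⟨le_refl k, hkn⟩, ?_⟩
        positivity
    -- head sum as a range sum
    have hhead : ∑ i ∈ Finset.Icc 1 (k-1), (1:ℚ)/(x i)
        = ∑ i ∈ Finset.range (k-1), (1:ℚ)/(y i) := by
      have e1 : Finset.Icc 1 (k-1) = Finset.Ico 1 k := by
        rw [← Finset.Ico_add_one_right_eq_Icc]; congr 1; omega
      rw [e1, Finset.sum_Ico_eq_sum_range, show k - 1 = k - 1 from rfl]
      apply Finset.sum_congr rfl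
      intro i _
      simp only [hy]
      rw [Nat.add_comm 1 i]
    -- apply Curtiss
    have hcur := curtiss (k-1) 1 y (le_refl 1)
      (fun i hi => hxpos (i+1) (Finset.mem_Icc.mpr ⟨by omega, by omega⟩))
      (fun i j hij hj => hmono (i+1) (j+1) (by omega) (by omega) (by omega))
      (by
        rw [← hhead]
        have h1 : ∑ i ∈ Finset.Icc 1 (k-1), (1:ℚ)/(x i) = 1 - r := by linarith [hsplit]
        have hone : (1:ℚ)/((1:ℕ):ℚ) = 1 := by norm_num
        rw [h1, hone]
        linarith)
    rw [← hhead] at hcur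
    have hcur2 : (1:ℚ)/(Syl 1 (k-1)) ≤ r := by
      have h1 : ∑ i ∈ Finset.Icc 1 (k-1), (1:ℚ)/(x i) = 1 - r := by linarith [hsplit]
      have hone : (1:ℚ)/((1:ℕ):ℚ) = 1 := by norm_num
      rw [h1, hone] at hcur
      linarith
    -- r ≤ (n-k+1)/(x k)
    have hrle : r ≤ ((n-k+1 : ℕ):ℚ)/(x k) := by
      rw [hr]
      have heach2 : ∀ i ∈ Finset.Icc k n, (1:ℚ)/(x i) ≤ 1/(x k) := by
        intro i hi
        obtain ⟨hki, hin⟩ := Finset.mem_Icc.mp hi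
        apply one_div_le_one_div_of_le hxkQ
        exact_mod_cast hmono k i hk1 hki hin
      calc ∑ i ∈ Finset.Icc k n, (1:ℚ)/(x i) ≤ ∑ _i ∈ Finset.Icc k n, (1:ℚ)/(x k) :=
            Finset.sum_le_sum heach2
        _ = ((n-k+1 : ℕ):ℚ)/(x k) := by
            rw [Finset.sum_const, Nat.card_Icc, nsmul_eq_mul]
            rw [show n + 1 - k = n - k + 1 from by omega]
            ring
    -- combine
    have huk : u k = Syl 1 (k-1) := by
      obtain ⟨j, rfl⟩ : ∃ j, k = j + 1 := ⟨k-1, by omega⟩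
      rw [hu j, Nat.add_sub_cancel]
    have hSpos : (0:ℚ) < (Syl 1 (k-1) : ℚ) := by exact_mod_cast Syl_pos (le_refl 1) (k-1)
    have hfin : (x k : ℚ) ≤ (Syl 1 (k-1) : ℚ) * ((n-k+1 : ℕ):ℚ) := by
      have h2 := le_trans hcur2 hrle
      rw [div_le_div_iff₀ hSpos hxkQ] at h2
      linarith [h2]
    rw [huk]
    exact_mod_cast hfin
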